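/- Let M ≥ 2 be an integer and d ∈ ℤ. Let θ̃₀ : ℝ → ℝ be the 2π-periodic function such that for every ω ∈ [0, 2π), θ̃₀(ω) = (d + 1/2)(M − 1)ω − ⌊Mω/(2π)⌋·π. Then for every ω ≥ 0 the series β(ω) := ∑_{i=1}^{∞} θ̃₀(ω/M^{i}) converges, and for every k ∈ ℕ and every ω ∈ [2kπ, 2(k+1)π), β(ω) ≡ (d + 1/2)ω − kπ (mod 2π). -/

import Mathlib

open Real

/-- Explicit formula for the cumulative phase β of the dual low-pass filter
(Appendix A of the paper, converse part of Proposition 2). -/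
theorem stmt_4 (M : ℕ) (hM : 2 ≤ M) (d : ℤ) (θ₀ : ℝ → ℝ)
    (hper : ∀ ω : ℝ, θ₀ (ω + 2 * π) = θ₀ ω)
    (hval : ∀ ω : ℝ, 0 ≤ ω → ω < 2 * π →
      θ₀ ω = ((d : ℝ) + 1 / 2) * ((M : ℝ) - 1) * ω - (⌊(M : ℝ) * ω / (2 * π)⌋ : ℝ) * π) :
    (∀ ω : ℝ, 0 ≤ ω → Summable (fun i : ℕ => θ₀ (ω / (M : ℝ) ^ (i + 1)))) ∧
    (∀ k : ℕ, ∀ ω : ℝ, 2 * k * π ≤ ω → ω < 2 * ((k : ℝ) + 1) * π →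
      ∃ n : ℤ, (∑' i : ℕ, θ₀ (ω / (M : ℝ) ^ (i + 1)))
        = ((d : ℝ) + 1 / 2) * ω - k * π + 2 * π * n) := by
  have hπ : (0:ℝ) < π := Real.pi_pos
  have hM1 : (1:ℝ) < (M:ℝ) := by exact_mod_cast (by omega : 1 < M)
  have hM0 : (0:ℝ) < (M:ℝ) := by linarith
  have hP : Function.Periodic θ₀ (2*π) := hper
  set c : ℝ := (d:ℝ) + 1/2 with hc
  have main : ∀ ω : ℝ, 0 ≤ ω →
      Summable (fun i : ℕ => θ₀ (ω / (M:ℝ) ^ (i+1))) ∧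
      ∃ m : ℤ, (∑' i : ℕ, θ₀ (ω / (M:ℝ) ^ (i+1)))
        = c * ω - (⌊ω/(2*π)⌋ : ℝ) * π + 2*π*m := by
    intro ω hω
    set A : ℕ → ℤ := fun i => ⌊ω/(2*π*(M:ℝ)^i)⌋ with hA
    set geo : ℕ → ℝ := fun i => (c*((M:ℝ)-1)*ω/M) * (1/M)^i with hgeo
    set g : ℕ → ℝ := fun i =>
      -(2*π*c*((M:ℝ)-1))*(A (i+1):ℝ) - ((A i:ℝ) - (M:ℝ)*(A (i+1):ℝ))*π with hg
    -- key pointwise formula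
    have key : ∀ i : ℕ, θ₀ (ω / (M:ℝ)^(i+1)) = geo i + g i := by
      intro i
      have hpow : (0:ℝ) < (M:ℝ)^(i+1) := pow_pos hM0 _
      have hpowi : (0:ℝ) < (M:ℝ)^i := pow_pos hM0 _
      set x := ω / (M:ℝ)^(i+1) with hx
      have hx0 : 0 ≤ x := div_nonneg hω hpow.le
      have hqx : A (i+1) = ⌊x/(2*π)⌋ := by
        rw [hA]
        congr 1
        rw [hx]
        field_simp
      set q := A (i+1) with hq
      have hle : (q:ℝ) ≤ x/(2*π) := by rw [hqx]; exact Int.floor_le _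
      have hlt : x/(2*π) < (q:ℝ) + 1 := by rw [hqx]; exact Int.lt_floor_add_one _
      have hr0 : 0 ≤ x - 2*π*q := by
        have : 2*π*(q:ℝ) ≤ x := by
          have := mul_le_mul_of_nonneg_left hle (le_of_lt (by positivity : (0:ℝ) < 2*π))
          calc 2*π*(q:ℝ) ≤ 2*π*(x/(2*π)) := this
            _ = x := by field_simp
        linarith
      have hr2 : x - 2*π*q < 2*π := by
        have : x < 2*π*((q:ℝ)+1) := by
          have := mul_lt_mul_of_pos_left hlt (by positivity : (0:ℝ) < 2*π)
          calc x = 2*π*(x/(2*π)) := by field_simp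
            _ < 2*π*((q:ℝ)+1) := this
        linarith
      have hθ : θ₀ x = θ₀ (x - 2*π*q) := by
        have h := hP.sub_int_mul_eq (x := x) q
        rw [← h]
        ring_nf
      rw [hθ, hval _ hr0 hr2]
      have hfl : ⌊(M:ℝ) * (x - 2*π*q) / (2*π)⌋ = A i - (M:ℤ) * q := by
        have hrw : (M:ℝ) * (x - 2*π*q) / (2*π) = ω/(2*π*(M:ℝ)^i) - (((M:ℤ)*q : ℤ) : ℝ) := by
          push_cast
          rw [hx]
          have hps : (M:ℝ)^(i+1) = (M:ℝ)^i * M := by ring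
          field_simp [hps]
          ring
        rw [hrw, Int.floor_sub_intCast]
      rw [hfl]
      rw [hgeo, hg, hx]
      push_cast
      have hMne : (M:ℝ) ≠ 0 := ne_of_gt hM0
      rw [← hq]
      simp only [one_div, inv_pow]
      field_simp
      ring
    -- choose N with ω < 2π M^N
    obtain ⟨N, hN⟩ : ∃ N : ℕ, ω / (2*π) < (M:ℝ)^N := pow_unbounded_of_one_lt _ hM1
    have hNω : ω < 2*π*(M:ℝ)^N := by
      have := mul_lt_mul_of_pos_left hN (by positivity : (0:ℝ) < 2*π)
      calc ω = 2*π*(ω/(2*π)) := by field_simp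
        _ < 2*π*(M:ℝ)^N := this
    have hA0 : ∀ i, N ≤ i → A i = 0 := by
      intro i hi
      rw [hA]
      rw [Int.floor_eq_zero_iff]
      constructor
      · positivity
      · have hpowle : (M:ℝ)^N ≤ (M:ℝ)^i := pow_le_pow_right₀ (le_of_lt hM1) hi
        have hlt2 : ω < 2*π*(M:ℝ)^i := lt_of_lt_of_le hNω (by nlinarith)
        rw [div_lt_one (by positivity)]
        linarith
    have hg0 : ∀ i ∉ Finset.range N, g i = 0 := by
      intro i hi
      have hiN : N ≤ i := by simpa using hi
      rw [hg]
      simp only [hA0 i hiN, hA0 (i+1) (by omega)]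
      push_cast
      ring
    have hsg : Summable g := summable_of_ne_finset_zero hg0
    have hsgeo : Summable geo := by
      apply Summable.mul_left
      exact summable_geometric_of_lt_one (by positivity) (by
        rw [div_lt_one hM0]; exact hM1)
    have hsum : Summable (fun i : ℕ => θ₀ (ω / (M:ℝ) ^ (i+1))) := by
      have := hsgeo.add hsg
      exact this.congr (fun i => (key i).symm)
    refine ⟨hsum, ?_⟩
    refine ⟨-(d * ((M:ℤ)-1) * ∑ i ∈ Finset.range N, A (i+1)), ?_⟩
    have htsum : (∑' i : ℕ, θ₀ (ω / (M:ℝ)^(i+1))) = (∑' i, geo i) + ∑' i, g i := by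
      rw [tsum_congr key]
      exact Summable.tsum_add hsgeo hsg
    have hgeosum : (∑' i, geo i) = c * ω := by
      rw [hgeo, tsum_mul_left, tsum_geometric_of_lt_one (by positivity)
        (by rw [div_lt_one hM0]; exact hM1)]
      have hMne : (M:ℝ) ≠ 0 := ne_of_gt hM0
      have hM1ne : (M:ℝ) - 1 ≠ 0 := by intro h; apply absurd hM1; linarith [h]
      field_simp
    have hgsum : (∑' i, g i) = ∑ i ∈ Finset.range N, g i := tsum_eq_sum hg0
    -- telescoping part
    have htel : ∑ i ∈ Finset.range N, ((A i : ℝ) - (A (i+1) : ℝ)) = (A 0 : ℝ) - (A N : ℝ) :=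
      Finset.sum_range_sub' (fun i => (A i : ℝ)) N
    have hAN : (A N : ℝ) = 0 := by rw [hA0 N le_rfl]; norm_num
    have hA00 : (A 0 : ℝ) = (⌊ω/(2*π)⌋ : ℝ) := by rw [hA]; norm_num
    set T : ℝ := ∑ i ∈ Finset.range N, (A (i+1) : ℝ) with hT
    have hsg2 : ∑ i ∈ Finset.range N, g i
        = -(2*π*c*((M:ℝ)-1))*T - ((A 0 : ℝ) - ((M:ℝ)-1)*T)*π := by
      rw [hg, hT]
      rw [Finset.sum_sub_distrib, ← Finset.mul_sum]
      congr 1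
      have : ∀ i : ℕ, ((A i : ℝ) - (M:ℝ)*(A (i+1):ℝ))*π
          = (((A i : ℝ) - (A (i+1) : ℝ)) - ((M:ℝ)-1)*(A (i+1):ℝ))*π := by
        intro i; ring
      rw [Finset.sum_congr rfl (fun i _ => this i), ← Finset.sum_mul,
        Finset.sum_sub_distrib, htel, hAN, ← Finset.mul_sum]
      ring
    rw [htsum, hgeosum, hgsum, hsg2, ← hA00]
    have hTcast : T = ((∑ i ∈ Finset.range N, A (i+1) : ℤ) : ℝ) := by
      rw [hT]; push_cast; ring
    rw [hTcast]
    push_cast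
    rw [hc]
    ring
  refine ⟨fun ω hω => (main ω hω).1, ?_⟩
  intro k ω h1 h2
  have hω : 0 ≤ ω := le_trans (by positivity) h1
  obtain ⟨m, hm⟩ := (main ω hω).2
  have hfloor : ⌊ω/(2*π)⌋ = (k:ℤ) := by
    rw [Int.floor_eq_iff]
    constructor
    · push_cast
      rw [le_div_iff₀ (by positivity)]
      linarith
    · push_cast
      rw [div_lt_iff₀ (by positivity)]
      linarith
  refine ⟨m, ?_⟩
  rw [hm, hfloor]
  push_cast
  rw [hc]
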